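/- For each of the groups G = ZMod 6, G = ZMod 8, G = ZMod 2 × ZMod 2 × ZMod 2, and G = ZMod 4 × ZMod 2, the set V_{3,G} ⊆ ℤ^(Fin 3 × G) of vertex vectors of sockets of the tripod K_{3,1} is not normal; hence the associated affine toric variety is not normal. -/

import Mathlib

open Pointwise

/-- The canonical map `ℤ^N → ℝ^N`. -/
def toReal {N : Type} (x : N → ℤ) : N → ℝ := fun i => (x i : ℝ)

/-- A finite set `V ⊆ ℤ^N` is normal if for every positive integer `k`, every point of
`ℤ^N` lying both in the dilated polytope `k • convexHull ℝ V` and in the additive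
subgroup of `ℤ^N` generated by `V` is a sum of `k` elements of `V` (with repetition
allowed). -/
def IsNormalSet {N : Type} (V : Set (N → ℤ)) : Prop :=
  ∀ k : ℕ, 0 < k → ∀ x : N → ℤ,
    toReal x ∈ (k : ℝ) • convexHull ℝ (toReal '' V) →
    x ∈ AddSubgroup.closure V →
    ∃ l : Multiset (N → ℤ), (∀ v ∈ l, v ∈ V) ∧ Multiset.card l = k ∧ l.sum = x

/-- The vertex vector of a socket `g : Fin 3 → G` of the tripod `K_{3,1}`: the element
of `ℤ^(Fin 3 × G)` with coordinate `(i,h)` equal to `1` if `g i = h` and `0` otherwise. -/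
def socketVec {G : Type} [DecidableEq G] (g : Fin 3 → G) : Fin 3 × G → ℤ :=
  fun p => if g p.1 = p.2 then 1 else 0

/-- The set `V_{3,G} ⊆ ℤ^(Fin 3 × G)` of vertex vectors of all sockets of the tripod
`K_{3,1}` (a socket is a function `g : Fin 3 → G` with `∑ i, g i = 0`). -/
def tripodVecs (G : Type) [AddCommGroup G] [DecidableEq G] : Set (Fin 3 × G → ℤ) :=
  {v | ∃ g : Fin 3 → G, (∑ i : Fin 3, g i = 0) ∧ v = socketVec g}

/-- the socket with legs `q.1, q.2, -(q.1+q.2)` -/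
def mk3 {G : Type} [AddCommGroup G] (q : G × G) : Fin 3 → G := ![q.1, q.2, -(q.1+q.2)]

lemma sum_mk3 {G : Type} [AddCommGroup G] (q : G × G) : ∑ i : Fin 3, mk3 q i = 0 := by
  simp [mk3, Fin.sum_univ_three] <;> abel

lemma mk3_mem {G : Type} [AddCommGroup G] [DecidableEq G] (q : G × G) :
    socketVec (mk3 q) ∈ tripodVecs G := ⟨mk3 q, sum_mk3 q, rfl⟩

lemma toReal_sum8 {N : Type} (v : Fin 8 → (N → ℤ)) :
    toReal (∑ j, v j) = ∑ j, toReal (v j) := by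
  funext p
  simp [toReal, Finset.sum_apply]

lemma witness_not_normal {G : Type} [AddCommGroup G] [DecidableEq G]
    (x : Fin 3 × G → ℤ) (f : Fin 8 → G × G)
    (hc : ∑ j : Fin 8, socketVec (mk3 (f j)) = 2 • x)
    (hlat : x ∈ AddSubgroup.closure (tripodVecs G))
    (hmem : ∀ q : G × G,
      x (0, q.1) ≠ 0 → x (1, q.2) ≠ 0 → x (2, -(q.1 + q.2)) ≠ 0 → ∃ j : Fin 8, q = f j)
    (key : ∀ j1 j2 j3 j4 : Fin 8,
      socketVec (mk3 (f j1)) + (socketVec (mk3 (f j2)) + (socketVec (mk3 (f j3))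
        + socketVec (mk3 (f j4)))) ≠ x) :
    ¬ IsNormalSet (tripodVecs G) := by
  intro hN
  -- convex hull membership
  have hconv : toReal x ∈ ((4 : ℕ) : ℝ) • convexHull ℝ (toReal '' tripodVecs G) := by
    have hcm : (Finset.univ : Finset (Fin 8)).centerMass (fun _ => (1 : ℝ))
        (fun j => toReal (socketVec (mk3 (f j)))) ∈ convexHull ℝ (toReal '' tripodVecs G) := by
      apply Finset.centerMass_mem_convexHull
      · intro i _; norm_num
      · norm_num
      · intro j _
        exact ⟨socketVec (mk3 (f j)), mk3_mem (f j), rfl⟩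
    have hS : ∑ j : Fin 8, toReal (socketVec (mk3 (f j))) = (2 : ℝ) • toReal x := by
      rw [← toReal_sum8, hc]
      funext p
      simp only [toReal, Pi.smul_apply, smul_eq_mul]
      ring_nf
      norm_cast
    have hcc : (Finset.univ : Finset (Fin 8)).centerMass (fun _ => (1 : ℝ))
        (fun j => toReal (socketVec (mk3 (f j)))) = (8 : ℝ)⁻¹ • ((2 : ℝ) • toReal x) := by
      rw [Finset.centerMass, ← hS]
      norm_num
    have hx4 : toReal x = ((4 : ℕ) : ℝ) • ((8 : ℝ)⁻¹ • ((2 : ℝ) • toReal x)) := by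
      rw [smul_smul, smul_smul]
      norm_num
    rw [hx4, ← hcc]
    exact Set.smul_mem_smul_set hcm
  obtain ⟨l, hl, hcard, hsum⟩ := hN 4 (by norm_num) x hconv hlat
  -- destructure l
  obtain ⟨v1, hv1⟩ := Multiset.card_pos_iff_exists_mem.1 (by rw [hcard]; norm_num)
  obtain ⟨t1, rfl⟩ := Multiset.exists_cons_of_mem hv1
  have ht1 : Multiset.card t1 = 3 := by
    rw [Multiset.card_cons] at hcard; omega
  obtain ⟨v2, v3, v4, rfl⟩ := Multiset.card_eq_three.1 ht1
  obtain ⟨g1, hs1, rfl⟩ := hl v1 (by simp)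
  obtain ⟨g2, hs2, rfl⟩ := hl v2 (by simp)
  obtain ⟨g3, hs3, rfl⟩ := hl v3 (by simp)
  obtain ⟨g4, hs4, rfl⟩ := hl v4 (by simp)
  simp only [Multiset.insert_eq_cons, Multiset.sum_cons, Multiset.sum_singleton] at hsum
  -- each g j equals mk3 of its first two legs
  have hmk : ∀ g : Fin 3 → G, (∑ i : Fin 3, g i = 0) → g = mk3 (g 0, g 1) := by
    intro g hg
    rw [Fin.sum_univ_three] at hg
    have h2 : g 2 = -(g 0 + g 1) := by
      rw [eq_neg_iff_add_eq_zero, add_comm]; exact hg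
    funext i
    fin_cases i
    · rfl
    · rfl
    · simpa [mk3] using h2
  have e1 := hmk g1 hs1
  have e2 := hmk g2 hs2
  have e3 := hmk g3 hs3
  have e4 := hmk g4 hs4
  -- guards: each leg value hits a nonzero coordinate of x
  have guard : ∀ (g : Fin 3 → G) (i : Fin 3),
      socketVec g1 + (socketVec g2 + (socketVec g3 + socketVec g4)) = x →
      (g = g1 ∨ g = g2 ∨ g = g3 ∨ g = g4) → x (i, g i) ≠ 0 := by
    intro g i hx hg
    have h := congrFun hx (i, g i)
    simp only [Pi.add_apply, socketVec] at h
    rcases hg with rfl | rfl | rfl | rfl <;> [skip; skip; skip; skip] <;>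
      · simp only [if_pos rfl] at h
        split_ifs at h <;> omega
  have c10 := guard g1 0 hsum (Or.inl rfl)
  have c11 := guard g1 1 hsum (Or.inl rfl)
  have c12 := guard g1 2 hsum (Or.inl rfl)
  have c20 := guard g2 0 hsum (Or.inr (Or.inl rfl))
  have c21 := guard g2 1 hsum (Or.inr (Or.inl rfl))
  have c22 := guard g2 2 hsum (Or.inr (Or.inl rfl))
  have c30 := guard g3 0 hsum (Or.inr (Or.inr (Or.inl rfl)))
  have c31 := guard g3 1 hsum (Or.inr (Or.inr (Or.inl rfl)))
  have c32 := guard g3 2 hsum (Or.inr (Or.inr (Or.inl rfl)))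
  have c40 := guard g4 0 hsum (Or.inr (Or.inr (Or.inr rfl)))
  have c41 := guard g4 1 hsum (Or.inr (Or.inr (Or.inr rfl)))
  have c42 := guard g4 2 hsum (Or.inr (Or.inr (Or.inr rfl)))
  -- rewrite third legs
  have r1 : g1 2 = -(g1 0 + g1 1) := congrFun e1 2
  have r2 : g2 2 = -(g2 0 + g2 1) := congrFun e2 2
  have r3 : g3 2 = -(g3 0 + g3 1) := congrFun e3 2
  have r4 : g4 2 = -(g4 0 + g4 1) := congrFun e4 2
  rw [r1] at c12; rw [r2] at c22; rw [r3] at c32; rw [r4] at c42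
  obtain ⟨j1, ej1⟩ := hmem (g1 0, g1 1) c10 c11 c12
  obtain ⟨j2, ej2⟩ := hmem (g2 0, g2 1) c20 c21 c22
  obtain ⟨j3, ej3⟩ := hmem (g3 0, g3 1) c30 c31 c32
  obtain ⟨j4, ej4⟩ := hmem (g4 0, g4 1) c40 c41 c42
  refine key j1 j2 j3 j4 ?_
  rw [← ej1, ← ej2, ← ej3, ← ej4, ← e1, ← e2, ← e3, ← e4]
  exact hsum

section Z6

def x6 : Fin 3 × ZMod 6 → ℤ := fun p => if p.2 = 0 ∨ p.2 = 1 ∨ p.2 = 3 ∨ p.2 = 4 then 1 else 0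

def f6 : Fin 8 → ZMod 6 × ZMod 6 := ![(0,0),(0,3),(1,1),(1,4),(3,0),(3,3),(4,1),(4,4)]

set_option synthInstance.maxSize 5000 in
set_option synthInstance.maxHeartbeats 4000000 in
set_option maxHeartbeats 4000000 in
set_option maxRecDepth 100000 in
lemma z6_not_normal : ¬ IsNormalSet (tripodVecs (ZMod 6)) := by
  apply witness_not_normal x6 f6
  · decide
  · have m : ∀ q : ZMod 6 × ZMod 6,
        socketVec (mk3 q) ∈ AddSubgroup.closure (tripodVecs (ZMod 6)) :=
      fun q => AddSubgroup.subset_closure (mk3_mem q)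
    have hx : x6 = socketVec (mk3 ((0 : ZMod 6), 1)) - socketVec (mk3 (1, 0))
        + socketVec (mk3 (1, 1)) + socketVec (mk3 (1, 2)) - socketVec (mk3 (2, 1))
        - socketVec (mk3 (2, 2)) + socketVec (mk3 (2, 3)) + socketVec (mk3 (2, 4))
        + socketVec (mk3 (3, 0)) + socketVec (mk3 (4, 0)) := by decide
    rw [hx]
    repeat' first
      | exact m _
      | exact neg_mem (m _)
      | apply add_mem
      | apply sub_mem
  · decide
  · decide

end Z6

section Z8

def x8 : Fin 3 × ZMod 8 → ℤ := fun p =>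
  if (p.1 = 2 ∧ (p.2 = 0 ∨ p.2 = 2 ∨ p.2 = 4 ∨ p.2 = 6)) ∨
     (p.1 ≠ 2 ∧ (p.2 = 0 ∨ p.2 = 1 ∨ p.2 = 4 ∨ p.2 = 5)) then 1 else 0

def f8 : Fin 8 → ZMod 8 × ZMod 8 := ![(0,0),(0,4),(1,1),(1,5),(4,0),(4,4),(5,1),(5,5)]

set_option synthInstance.maxSize 5000 in
set_option synthInstance.maxHeartbeats 4000000 in
set_option maxHeartbeats 4000000 in
set_option maxRecDepth 100000 in
lemma z8_not_normal : ¬ IsNormalSet (tripodVecs (ZMod 8)) := by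
  apply witness_not_normal x8 f8
  · decide
  · have m : ∀ q : ZMod 8 × ZMod 8,
        socketVec (mk3 q) ∈ AddSubgroup.closure (tripodVecs (ZMod 8)) :=
      fun q => AddSubgroup.subset_closure (mk3_mem q)
    have hx : x8 = socketVec (mk3 ((0 : ZMod 8), 1)) - socketVec (mk3 (1, 0))
        + socketVec (mk3 (1, 1)) + socketVec (mk3 (1, 2)) + socketVec (mk3 (1, 3))
        - socketVec (mk3 (1, 6)) - socketVec (mk3 (2, 1)) - socketVec (mk3 (2, 2))
        - socketVec (mk3 (2, 3)) + socketVec (mk3 (2, 4)) + socketVec (mk3 (2, 5))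
        + socketVec (mk3 (2, 6)) + socketVec (mk3 (4, 0)) + socketVec (mk3 (5, 0)) := by decide
    rw [hx]
    repeat' first
      | exact m _
      | exact neg_mem (m _)
      | apply add_mem
      | apply sub_mem
  · decide
  · decide

end Z8

section Z222

abbrev G222 := ZMod 2 × ZMod 2 × ZMod 2

def x222 : Fin 3 × G222 → ℤ := fun p =>
  if (p.1 = 0 ∧ p.2.1 = 0) ∨ (p.1 = 1 ∧ p.2.2.1 = 0) ∨ (p.1 = 2 ∧ p.2.1 = p.2.2.1)
  then 1 else 0

def f222 : Fin 8 → G222 × G222 :=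
  ![((0,0,0),(0,0,0)), ((0,0,0),(0,0,1)), ((0,0,1),(0,0,0)), ((0,0,1),(0,0,1)),
    ((0,1,0),(1,0,0)), ((0,1,0),(1,0,1)), ((0,1,1),(1,0,0)), ((0,1,1),(1,0,1))]

set_option synthInstance.maxSize 5000 in
set_option synthInstance.maxHeartbeats 4000000 in
set_option maxHeartbeats 4000000 in
set_option maxRecDepth 100000 in
lemma z222_not_normal : ¬ IsNormalSet (tripodVecs G222) := by
  apply witness_not_normal x222 f222
  · decide
  · have m : ∀ q : G222 × G222,
        socketVec (mk3 q) ∈ AddSubgroup.closure (tripodVecs G222) :=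
      fun q => AddSubgroup.subset_closure (mk3_mem q)
    have hx : x222 = socketVec (mk3 (((0,0,0) : G222), (0,1,0)))
        + socketVec (mk3 ((0,0,1), (0,0,0))) + socketVec (mk3 ((0,0,1), (0,0,1)))
        - socketVec (mk3 ((0,0,1), (0,1,0))) - socketVec (mk3 ((0,1,0), (0,0,0)))
        + socketVec (mk3 ((0,1,0), (1,0,0))) + socketVec (mk3 ((0,1,0), (1,0,1)))
        + socketVec (mk3 ((0,1,1), (0,0,0))) := by decide
    rw [hx]
    repeat' first
      | exact m _
      | exact neg_mem (m _)
      | apply add_mem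
      | apply sub_mem
  · decide
  · decide

end Z222

section Z42

abbrev G42 := ZMod 4 × ZMod 2

def x42 : Fin 3 × G42 → ℤ := fun p =>
  if (p.1 = 2 ∧ (p.2.1 = 0 ∨ p.2.1 = 2)) ∨ (p.1 ≠ 2 ∧ (p.2.1 = 0 ∨ p.2.1 = 1))
  then 1 else 0

def f42 : Fin 8 → G42 × G42 :=
  ![((0,0),(0,0)), ((0,0),(0,1)), ((0,1),(0,0)), ((0,1),(0,1)),
    ((1,0),(1,0)), ((1,0),(1,1)), ((1,1),(1,0)), ((1,1),(1,1))]

set_option synthInstance.maxSize 5000 in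
set_option synthInstance.maxHeartbeats 4000000 in
set_option maxHeartbeats 4000000 in
set_option maxRecDepth 100000 in
lemma z42_not_normal : ¬ IsNormalSet (tripodVecs G42) := by
  apply witness_not_normal x42 f42
  · decide
  · have m : ∀ q : G42 × G42,
        socketVec (mk3 q) ∈ AddSubgroup.closure (tripodVecs G42) :=
      fun q => AddSubgroup.subset_closure (mk3_mem q)
    have hx : x42 = socketVec (mk3 (((0,0) : G42), (1,0)))
        + socketVec (mk3 ((0,1), (0,0))) + socketVec (mk3 ((0,1), (0,1)))
        - socketVec (mk3 ((0,1), (1,0))) - socketVec (mk3 ((1,0), (0,0)))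
        + socketVec (mk3 ((1,0), (1,0))) + socketVec (mk3 ((1,0), (1,1)))
        + socketVec (mk3 ((1,1), (0,0))) := by decide
    rw [hx]
    repeat' first
      | exact m _
      | exact neg_mem (m _)
      | apply add_mem
      | apply sub_mem
  · decide
  · decide

end Z42

/-- For each of the groups `ℤ/6`, `ℤ/8`, `ℤ/2 × ℤ/2 × ℤ/2` and `ℤ/4 × ℤ/2`, the set of
vertex vectors of sockets of the tripod `K_{3,1}` is not normal; hence the associated
affine toric variety is not normal. -/
theorem tripod_not_normal_examples :
    ¬ IsNormalSet (tripodVecs (ZMod 6)) ∧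
    ¬ IsNormalSet (tripodVecs (ZMod 8)) ∧
    ¬ IsNormalSet (tripodVecs (ZMod 2 × ZMod 2 × ZMod 2)) ∧
    ¬ IsNormalSet (tripodVecs (ZMod 4 × ZMod 2)) := by
  exact ⟨z6_not_normal, z8_not_normal, z222_not_normal, z42_not_normal⟩
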